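/- Suppose for all n ≥ 3 the prime gap satisfies p_{n+1} - p_n < (22/25) · sqrt(p_n) · ln(p_n). Then for all n ≥ 3 and all real m > 2, p_{n+1}^(1/m) - p_n^(1/m) < 44/(25 · e · (m-2)). -/

import Mathlib

/-- `prime n` is the n-th prime, with `prime 1 = 2`. -/
noncomputable def prime (n : ℕ) : ℕ := Nat.nth Nat.Prime (n - 1)

theorem higher_root_andrica
    (h : ∀ n : ℕ, 3 ≤ n →
      (prime (n+1) : ℝ) - prime n <
        22/25 * Real.sqrt (prime n) * Real.log (prime n)) :
    ∀ n : ℕ, 3 ≤ n → ∀ m : ℝ, 2 < m →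
      (prime (n+1) : ℝ) ^ (1/m) - (prime n : ℝ) ^ (1/m) <
        44 / (25 * Real.exp 1 * (m - 2)) := by
  intro n hn m hm
  have hm0 : (0:ℝ) < m := by linarith
  set a : ℝ := (prime (n+1) : ℝ) with ha
  set b : ℝ := (prime n : ℝ) with hbdef
  have hpb : Nat.Prime (prime n) := Nat.prime_nth_prime _
  have hb2 : (2:ℝ) ≤ b := by
    rw [hbdef]; exact_mod_cast hpb.two_le
  have hb0 : (0:ℝ) < b := by linarith
  have hb1 : (1:ℝ) < b := by linarith
  have hlogb : 0 < Real.log b := Real.log_pos hb1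
  have hba : b ≤ a := by
    have h1 : prime n ≤ prime (n+1) :=
      Nat.nth_monotone Nat.infinite_setOf_prime (by omega)
    rw [ha, hbdef]; exact_mod_cast h1
  set c : ℝ := 1/m with hc
  have hc0 : 0 < c := by positivity
  have hc1 : c ≤ 1 := by
    rw [hc, div_le_one hm0]; linarith
  set t : ℝ := 1/2 - c with ht
  have ht0 : 0 < t := by
    rw [ht, hc]
    have : 1/m < 1/2 := one_div_lt_one_div_of_lt two_pos hm
    linarith
  have he : (0:ℝ) < Real.exp 1 := Real.exp_pos 1
  -- Step 1: concavity / Bernoulli bound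
  have step1 : a ^ c - b ^ c ≤ c * (a - b) * b ^ (c - 1) := by
    have hs : (0:ℝ) ≤ a/b - 1 := by
      rw [sub_nonneg, le_div_iff₀ hb0, one_mul]; exact hba
    have hber := rpow_one_add_le_one_add_mul_self (s := a/b - 1)
      (by linarith) hc0.le hc1
    have h1 : (a/b) ^ c ≤ 1 + c * (a/b - 1) := by
      simpa using hber
    have h2 : a ^ c ≤ b ^ c * (1 + c * (a/b - 1)) := by
      calc a ^ c = (b * (a/b)) ^ c := by
            rw [mul_div_cancel₀ _ (ne_of_gt hb0)]
        _ = b ^ c * (a/b) ^ c := Real.mul_rpow hb0.le (by positivity)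
        _ ≤ b ^ c * (1 + c * (a/b - 1)) := by
            exact mul_le_mul_of_nonneg_left h1 (Real.rpow_nonneg hb0.le c)
      -- done
    have hkey : b ^ c * (1 + c * (a/b - 1)) = b ^ c + c * (a - b) * b ^ (c - 1) := by
      have hbc : b ^ (c - 1) = b ^ c / b := by
        rw [Real.rpow_sub hb0, Real.rpow_one]
      rw [hbc]
      field_simp
    linarith [h2, hkey ▸ h2]
  -- Step 2: strict bound from hypothesis
  have hgap : a - b < 22/25 * Real.sqrt b * Real.log b := h n hn
  have hmul : 0 < c * b ^ (c - 1) := by positivity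
  have step2 : c * (a - b) * b ^ (c - 1) <
      c * (22/25 * Real.sqrt b * Real.log b) * b ^ (c - 1) := by
    have := mul_lt_mul_of_pos_right (mul_lt_mul_of_pos_left hgap hc0)
      (Real.rpow_pos_of_pos hb0 (c-1))
    linarith
  -- Step 3: log b * b^(-t) ≤ 1/(e t)
  have hlog_le : Real.log b ≤ b ^ t / (Real.exp 1 * t) := by
    have h1 : Real.log (b ^ t) ≤ b ^ t / Real.exp 1 := by
      have hbt : 0 < b ^ t := Real.rpow_pos_of_pos hb0 t
      have h2 : Real.log (b ^ t / Real.exp 1) ≤ b ^ t / Real.exp 1 - 1 :=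
        Real.log_le_sub_one_of_pos (by positivity)
      rw [Real.log_div (ne_of_gt hbt) (ne_of_gt he), Real.log_exp] at h2
      linarith
    rw [Real.log_rpow hb0] at h1
    rw [le_div_iff₀ (by positivity)]
    calc Real.log b * (Real.exp 1 * t) = (t * Real.log b) * Real.exp 1 := by ring
      _ ≤ (b ^ t / Real.exp 1) * Real.exp 1 := by
          exact mul_le_mul_of_nonneg_right h1 he.le
      _ = b ^ t := by field_simp
  have step3 : c * (22/25 * Real.sqrt b * Real.log b) * b ^ (c - 1) ≤
      44 / (25 * Real.exp 1 * (m - 2)) := by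
    have hsqrt : Real.sqrt b = b ^ (1/2 : ℝ) := Real.sqrt_eq_rpow b
    have hcomb : Real.sqrt b * b ^ (c - 1) = b ^ (-t) := by
      rw [hsqrt, ← Real.rpow_add hb0]
      congr 1
      rw [ht]; ring
    have hbt : b ^ (-t) = (b ^ t)⁻¹ := by
      rw [Real.rpow_neg hb0.le]
    have hlogbt : Real.log b * b ^ (-t) ≤ 1 / (Real.exp 1 * t) := by
      rw [hbt]
      have hbtpos : 0 < b ^ t := Real.rpow_pos_of_pos hb0 t
      calc Real.log b * (b ^ t)⁻¹
          ≤ (b ^ t / (Real.exp 1 * t)) * (b ^ t)⁻¹ :=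
            mul_le_mul_of_nonneg_right hlog_le (by positivity)
        _ = 1 / (Real.exp 1 * t) := by field_simp
    have hLHS : c * (22/25 * Real.sqrt b * Real.log b) * b ^ (c - 1)
        = 22/25 * c * (Real.log b * (Real.sqrt b * b ^ (c-1))) := by ring
    rw [hLHS, hcomb]
    have hstep : Real.log b * b ^ (-t) ≤ 1 / (Real.exp 1 * t) := hlogbt
    have h225 : (0:ℝ) < 22/25 * c := by positivity
    calc 22/25 * c * (Real.log b * b ^ (-t))
        ≤ 22/25 * c * (1 / (Real.exp 1 * t)) :=
          mul_le_mul_of_nonneg_left hstep h225.le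
      _ = 44 / (25 * Real.exp 1 * (m - 2)) := by
          rw [ht, hc]
          have hm2 : m - 2 ≠ 0 := by linarith
          have he' := he.ne'
          have h12 : (1:ℝ)/2 - 1/m = (m-2)/(2*m) := by field_simp
          rw [h12]
          field_simp
          ring
    -- done
  calc a ^ (1/m) - b ^ (1/m) = a ^ c - b ^ c := by rw [hc]
    _ ≤ c * (a - b) * b ^ (c - 1) := step1
    _ < c * (22/25 * Real.sqrt b * Real.log b) * b ^ (c - 1) := step2
    _ ≤ 44 / (25 * Real.exp 1 * (m - 2)) := step3
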